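/- Let X and Y be integrable random variables on a probability space with E|XY| < ∞. Let 𝒢¹, 𝒢² and 𝒢 be sub-σ-algebras such that 𝒢¹ ⊆ 𝒢, 𝒢² is independent of 𝒢, X is 𝒢-measurable, and Y is independent of σ(𝒢, 𝒢²). Then E(XY | σ(𝒢¹, 𝒢²)) = E(X | 𝒢¹) · E(Y) almost surely. -/

import Mathlib

open MeasureTheory ProbabilityTheory

lemma my_indep_mono {Ω : Type*} {m₁ m₂ m₁' m₂' : MeasurableSpace Ω}
    {mΩ : MeasurableSpace Ω} {μ : Measure Ω}
    (h : Indep m₁ m₂ μ) (h1 : m₁' ≤ m₁) (h2 : m₂' ≤ m₂) :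
    Indep m₁' m₂' μ := by
  rw [Indep_iff] at h ⊢
  exact fun t1 t2 ht1 ht2 => h t1 t2 (h1 _ ht1) (h2 _ ht2)

lemma my_indepFun {Ω : Type*} {M1 M2 : MeasurableSpace Ω}
    {mΩ : MeasurableSpace Ω} {μ : Measure Ω} (h : Indep M1 M2 μ) {f g : Ω → ℝ}
    (hf : Measurable[M1] f) (hg : Measurable[M2] g) : IndepFun f g μ := by
  rw [IndepFun_iff_Indep]
  exact my_indep_mono h hf.comap_le hg.comap_le

lemma my_setIntegral_inter {Ω : Type*} {G2 G : MeasurableSpace Ω}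
    {m : MeasurableSpace Ω} {μ : Measure Ω} [IsProbabilityMeasure μ]
    (hGm : G ≤ m) (hG2m : G2 ≤ m)
    (hind : Indep G G2 μ) {f : Ω → ℝ} (hfm : Measurable[G] f)
    {s1 s2 : Set Ω} (hs1 : MeasurableSet[G] s1) (hs2 : MeasurableSet[G2] s2) :
    ∫ x in s1 ∩ s2, f x ∂μ = (∫ x in s1, f x ∂μ) * (μ s2).toReal := by
  have hum : Measurable[G] (s1.indicator f) := hfm.indicator hs1
  have hvm : Measurable[G2] (s2.indicator (fun _ => (1 : ℝ))) :=
    measurable_const.indicator hs2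
  have hif : IndepFun (s1.indicator f) (s2.indicator (fun _ => (1 : ℝ))) μ :=
    my_indepFun hind hum hvm
  have huv : (fun x => s1.indicator f x * s2.indicator (fun _ => (1 : ℝ)) x)
      = (s1 ∩ s2).indicator f := by
    funext x
    by_cases h1 : x ∈ s1 <;> by_cases h2 : x ∈ s2 <;>
      simp [Set.indicator, h1, h2]
  have hmul : ∫ x, s1.indicator f x * s2.indicator (fun _ => (1 : ℝ)) x ∂μ
      = (∫ x, s1.indicator f x ∂μ) * ∫ x, s2.indicator (fun _ => (1 : ℝ)) x ∂μ :=
    hif.integral_fun_mul_eq_mul_integral (hum.mono hGm le_rfl).aestronglyMeasurable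
      (hvm.mono hG2m le_rfl).aestronglyMeasurable
  calc ∫ x in s1 ∩ s2, f x ∂μ = ∫ x, (s1 ∩ s2).indicator f x ∂μ :=
        (integral_indicator (show MeasurableSet[m] (s1 ∩ s2) from
          (hGm _ hs1).inter (hG2m _ hs2))).symm
    _ = ∫ x, s1.indicator f x * s2.indicator (fun _ => (1 : ℝ)) x ∂μ := by rw [huv]
    _ = (∫ x, s1.indicator f x ∂μ) * ∫ x, s2.indicator (fun _ => (1 : ℝ)) x ∂μ := hmul
    _ = (∫ x in s1, f x ∂μ) * (μ s2).toReal := by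
        rw [integral_indicator (hGm _ hs1), integral_indicator (hG2m _ hs2)]
        simp [Measure.real]

lemma my_mul_indep {Ω : Type*} {M : MeasurableSpace Ω}
    {m : MeasurableSpace Ω} {μ : Measure Ω} [IsProbabilityMeasure μ]
    (hM : M ≤ m) {Y f : Ω → ℝ}
    (hY : AEStronglyMeasurable Y μ)
    (hind : Indep (MeasurableSpace.comap Y inferInstance) M μ)
    (hfm : Measurable[M] f) {t : Set Ω} (ht : MeasurableSet[M] t) :
    ∫ x in t, f x * Y x ∂μ = (∫ x in t, f x ∂μ) * ∫ x, Y x ∂μ := by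
  have hum : Measurable[M] (t.indicator f) := hfm.indicator ht
  have hif : IndepFun (t.indicator f) Y μ := by
    rw [IndepFun_iff_Indep]
    exact my_indep_mono hind.symm hum.comap_le le_rfl
  have huv : (fun x => t.indicator f x * Y x) = t.indicator (fun x => f x * Y x) := by
    funext x
    by_cases h : x ∈ t <;> simp [h]
  have hmul : ∫ x, t.indicator f x * Y x ∂μ
      = (∫ x, t.indicator f x ∂μ) * ∫ x, Y x ∂μ :=
    hif.integral_fun_mul_eq_mul_integral (hum.mono hM le_rfl).aestronglyMeasurable hY
  calc ∫ x in t, f x * Y x ∂μ = ∫ x, t.indicator (fun x => f x * Y x) x ∂μ :=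
        (integral_indicator (hM _ ht)).symm
    _ = ∫ x, t.indicator f x * Y x ∂μ := by rw [huv]
    _ = (∫ x, t.indicator f x ∂μ) * ∫ x, Y x ∂μ := hmul
    _ = (∫ x in t, f x ∂μ) * ∫ x, Y x ∂μ := by rw [integral_indicator (hM _ ht)]

/-- Conditional product lemma: if `𝒢¹ ⊆ 𝒢`, `𝒢²` is independent of `𝒢`, `X` is
`𝒢`-measurable and `Y` is independent of `σ(𝒢, 𝒢²)`, then
`E(XY | σ(𝒢¹, 𝒢²)) = E(X | 𝒢¹) · E Y` a.s. -/
theorem stmt_0 {Ω : Type*} {m : MeasurableSpace Ω} (μ : Measure Ω) [IsProbabilityMeasure μ]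
    (G1 G2 G : MeasurableSpace Ω) (hG1G : G1 ≤ G) (hGm : G ≤ m) (hG1m : G1 ≤ m)
    (hG2m : G2 ≤ m)
    (X Y : Ω → ℝ)
    (hX : Integrable X μ) (hY : Integrable Y μ)
    (hXY : Integrable (fun ω => X ω * Y ω) μ)
    (hXmeas : Measurable[G] X)
    (hG2indep : Indep G2 G μ)
    (hYindep : Indep (MeasurableSpace.comap Y inferInstance) (G ⊔ G2) μ) :
    μ[fun ω => X ω * Y ω | G1 ⊔ G2] =ᵐ[μ]
      fun ω => (μ[X | G1]) ω * ∫ ω', Y ω' ∂μ := by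
  letI mm : MeasurableSpace Ω := m
  have hsup : G1 ⊔ G2 ≤ m := sup_le hG1m hG2m
  have hGsup : G ⊔ G2 ≤ m := sup_le hGm hG2m
  set c := ∫ ω', Y ω' ∂μ with hc
  set g : Ω → ℝ := fun ω => (μ[X | G1]) ω * c with hg
  have hgm1 : StronglyMeasurable[G1] g := stronglyMeasurable_condExp.mul_const c
  have hg_int : Integrable g μ := integrable_condExp.mul_const c
  have hXG : Measurable[G ⊔ G2] X := hXmeas.mono le_sup_left le_rfl
  have hcm : Measurable[G] (μ[X | G1]) := (stronglyMeasurable_condExp.mono hG1G).measurable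
  -- total integral equality
  have htot : ∫ x, g x ∂μ = ∫ x, X x * Y x ∂μ := by
    have h1 : ∫ x in (Set.univ : Set Ω), X x * Y x ∂μ =
        (∫ x in (Set.univ : Set Ω), X x ∂μ) * c :=
      my_mul_indep hGsup hY.1 hYindep hXG MeasurableSet.univ
    simp only [Measure.restrict_univ] at h1
    rw [h1, hg]
    rw [integral_mul_const, integral_condExp hG1m]
  -- equality of set integrals on G1 ⊔ G2
  set S : Set (Set Ω) :=
    {s | ∃ s1 s2, MeasurableSet[G1] s1 ∧ MeasurableSet[G2] s2 ∧ s = s1 ∩ s2} with hS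
  have h_eq : (G1 ⊔ G2 : MeasurableSpace Ω) = MeasurableSpace.generateFrom S := by
    refine le_antisymm (sup_le ?_ ?_) (MeasurableSpace.generateFrom_le ?_)
    · exact fun s hs => MeasurableSpace.measurableSet_generateFrom
        ⟨s, Set.univ, hs, MeasurableSet.univ, (Set.inter_univ s).symm⟩
    · exact fun s hs => MeasurableSpace.measurableSet_generateFrom
        ⟨Set.univ, s, MeasurableSet.univ, hs, (Set.univ_inter s).symm⟩
    · rintro t ⟨s1, s2, hs1, hs2, rfl⟩
      exact ((le_sup_left : G1 ≤ G1 ⊔ G2) _ hs1).inter ((le_sup_right : G2 ≤ G1 ⊔ G2) _ hs2)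
  have h_pi : IsPiSystem S := by
    rintro t ⟨s1, s2, hs1, hs2, rfl⟩ t' ⟨t1, t2, ht1, ht2, rfl⟩ -
    refine ⟨s1 ∩ t1, s2 ∩ t2, hs1.inter ht1, hs2.inter ht2, ?_⟩
    rw [Set.inter_inter_inter_comm]
  have key : ∀ t : Set Ω, MeasurableSet[G1 ⊔ G2] t →
      ∫ x in t, g x ∂μ = ∫ x in t, X x * Y x ∂μ := by
    intro t ht
    refine @MeasurableSpace.induction_on_inter Ω (G1 ⊔ G2)
      (fun t _ => ∫ x in t, g x ∂μ = ∫ x in t, X x * Y x ∂μ) S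
      h_eq h_pi (by simp) ?_ ?_ ?_ t ht
    · rintro t ⟨s1, s2, hs1, hs2, rfl⟩
      have hL : ∫ x in s1 ∩ s2, X x * Y x ∂μ =
          (∫ x in s1, X x ∂μ) * (μ s2).toReal * c := by
        have h2 : ∫ x in s1 ∩ s2, X x * Y x ∂μ = (∫ x in s1 ∩ s2, X x ∂μ) * c :=
          my_mul_indep hGsup hY.1 hYindep hXG
            (show MeasurableSet[G ⊔ G2] (s1 ∩ s2) from
              ((le_sup_left : G ≤ G ⊔ G2) _ (hG1G _ hs1)).inter
                ((le_sup_right : G2 ≤ G ⊔ G2) _ hs2))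
        have h3 : ∫ x in s1 ∩ s2, X x ∂μ = (∫ x in s1, X x ∂μ) * (μ s2).toReal :=
          my_setIntegral_inter hGm hG2m hG2indep.symm hXmeas (hG1G _ hs1) hs2
        rw [h2, h3]
      have hR : ∫ x in s1 ∩ s2, g x ∂μ =
          (∫ x in s1, X x ∂μ) * (μ s2).toReal * c := by
        have h4 : ∫ x in s1 ∩ s2, g x ∂μ = (∫ x in s1 ∩ s2, (μ[X | G1]) x ∂μ) * c := by
          rw [hg]; exact integral_mul_const c _
        have h5 : ∫ x in s1 ∩ s2, (μ[X | G1]) x ∂μ =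
            (∫ x in s1, (μ[X | G1]) x ∂μ) * (μ s2).toReal :=
          my_setIntegral_inter hGm hG2m hG2indep.symm hcm (hG1G _ hs1) hs2
        have h6 : ∫ x in s1, (μ[X | G1]) x ∂μ = ∫ x in s1, X x ∂μ :=
          setIntegral_condExp hG1m hX hs1
        rw [h4, h5, h6]
      rw [hL, hR]
    · intro t ht hC
      have h1 := integral_add_compl (hsup _ ht) hg_int
      have h2' : (∫ x in t, X x * Y x ∂μ) + ∫ x in tᶜ, X x * Y x ∂μ
          = ∫ x, X x * Y x ∂μ := integral_add_compl (hsup _ ht) hXY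
      linarith
    · intro f hdisj hmeas hC
      rw [integral_iUnion (fun i => hsup _ (hmeas i)) hdisj hg_int.integrableOn,
        integral_iUnion (fun i => hsup _ (hmeas i)) hdisj hXY.integrableOn]
      exact tsum_congr hC
  exact (ae_eq_condExp_of_forall_setIntegral_eq hsup hXY
    (fun s _ _ => hg_int.integrableOn) (fun s hs _ => key s hs)
    ((hgm1.mono (le_sup_left : G1 ≤ G1 ⊔ G2)).aestronglyMeasurable (m₀ := m) (μ := μ))).symm
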